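/- Linearizability of the snapshot object (abstract form of Lemma 5): under the stated assumptions there exists a relation T on Op that is a strict total order (irreflexive, transitive, and total on distinct elements) such that: (i) op ≺ op' implies T op op'; and (ii) for every snapshot operation s (¬W s) and every register r there is a write w with W w, reg w = r and ts w = tsa s r such that T w s, and every write w' ≠ w with W w' and reg w' = r satisfies T w' w or T s w'. (Each snapshot returns, for each register, the value written by the last write on that register preceding it in the linearization, and the linearization respects real-time precedence.) -/

import Mathlib

/-- Abstract form of Lemma 5 (linearizability of the snapshot object): there is
a strict total order on operations extending real-time precedence in which each
snapshot returns, for each register, the value of the last preceding write on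
that register. -/
theorem snapshot_linearizable {Op ρ B : Type*} [LinearOrder B]
    (W : Op → Prop) (reg : Op → ρ) (prec : Op → Op → Prop)
    (hirr : ∀ op, ¬ prec op op)
    (htrans : ∀ a b c, prec a b → prec b c → prec a c)
    (ts : Op → B) (tsa : Op → ρ → B)
    (h1 : ∀ op op', tsa op ≤ tsa op' ∨ tsa op' ≤ tsa op)
    (h2 : ∀ op op', prec op op' → tsa op ≤ tsa op')
    (h3 : ∀ op op', prec op op' → W op' → tsa op ≠ tsa op')
    (h4 : ∀ w, W w → ts w ≤ tsa w (reg w))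
    (h5 : ∀ w op, W w → ts w ≤ tsa op (reg w) → tsa w ≤ tsa op)
    (h6 : ∀ w w', W w → W w' → reg w = reg w' → ts w = ts w' → w = w')
    (h7 : ∀ s, ¬ W s → ∀ r : ρ, ∃ w, W w ∧ reg w = r ∧ ts w = tsa s r) :
    ∃ T : Op → Op → Prop,
      (∀ op, ¬ T op op) ∧
      (∀ a b c, T a b → T b c → T a c) ∧
      (∀ a b, a ≠ b → T a b ∨ T b a) ∧
      (∀ op op', prec op op' → T op op') ∧
      (∀ s, ¬ W s → ∀ r : ρ, ∃ w, W w ∧ reg w = r ∧ ts w = tsa s r ∧ T w s ∧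
        ∀ w', w' ≠ w → W w' → reg w' = r → (T w' w ∨ T s w')) := by
  classical
  -- linear extension of the reflexive closure of prec
  haveI hpo : IsPartialOrder Op (fun a b => prec a b ∨ a = b) :=
    { refl := fun a => Or.inr rfl
      trans := by
        rintro a b c (hab | rfl) (hbc | rfl)
        · exact Or.inl (htrans _ _ _ hab hbc)
        · exact Or.inl hab
        · exact Or.inl hbc
        · exact Or.inr rfl
      antisymm := by
        rintro a b (hab | rfl) (hba | hba)
        · exact absurd (htrans _ _ _ hab hba) (hirr a)
        · exact hba.symm
        · rfl
        · rfl }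
  obtain ⟨le, hlin, hle⟩ := extend_partialOrder (fun a b => prec a b ∨ a = b)
  haveI := hlin
  have letrans : ∀ a b c : Op, le a b → le b c → le a c := fun a b c => IsTrans.trans a b c
  have leantisymm : ∀ a b : Op, le a b → le b a → a = b := fun a b => Std.Antisymm.antisymm a b
  have letot : ∀ a b : Op, le a b ∨ le b a := fun a b => Std.Total.total a b
  set L : Op → Op → Prop := fun a b => le a b ∧ a ≠ b with hL
  have Ltrans : ∀ a b c, L a b → L b c → L a c := by
    rintro a b c ⟨hab, hne⟩ ⟨hbc, hne'⟩
    refine ⟨letrans _ _ _ hab hbc, fun h => ?_⟩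
    subst h
    exact hne' (leantisymm _ _ hbc hab)
  have Ltotal : ∀ a b, a ≠ b → L a b ∨ L b a := by
    intro a b hne
    rcases letot a b with h | h
    · exact Or.inl ⟨h, hne⟩
    · exact Or.inr ⟨h, hne.symm⟩
  have Lprec : ∀ a b, prec a b → L a b := by
    intro a b h
    exact ⟨hle a b (Or.inl h), fun e => hirr a (e ▸ h)⟩
  -- strict order on timestamp arrays
  set A : Op → Op → Prop := fun a b => tsa a ≤ tsa b ∧ tsa a ≠ tsa b with hA
  -- the linearization
  set T : Op → Op → Prop := fun a b => A a b ∨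
    (tsa a = tsa b ∧ ((W a ∧ ¬ W b) ∨
      (W a ∧ W b ∧ (ts a < ts b ∨ (ts a = ts b ∧ L a b))) ∨
      (¬ W a ∧ ¬ W b ∧ L a b))) with hT
  refine ⟨T, ?_, ?_, ?_, ?_, ?_⟩
  · -- irreflexive
    rintro a (⟨_, hne⟩ | ⟨_, h⟩)
    · exact hne rfl
    · rcases h with ⟨hw, hnw⟩ | ⟨_, _, h | ⟨_, _, h⟩⟩ | ⟨_, _, _, h⟩
      · exact hnw hw
      · exact lt_irrefl _ h
      · exact h rfl
      · exact h rfl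
  · -- transitive
    rintro a b c (⟨hab, hne⟩ | ⟨heq, hab⟩) (⟨hbc, hne'⟩ | ⟨heq', hbc⟩)
    · exact Or.inl ⟨le_trans hab hbc, fun h => hne (le_antisymm hab (h ▸ hbc))⟩
    · exact Or.inl ⟨heq' ▸ hab, heq' ▸ hne⟩
    · exact Or.inl ⟨heq ▸ hbc, heq ▸ hne'⟩
    · refine Or.inr ⟨heq.trans heq', ?_⟩
      rcases hab with ⟨hWa, hnWb⟩ | ⟨hWa, hWb, hlex⟩ | ⟨hnWa, hnWb, hLab⟩ <;>
        rcases hbc with ⟨hWb', hnWc⟩ | ⟨hWb', hWc, hlex'⟩ | ⟨hnWb', hnWc, hLbc⟩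
      · exact absurd hWb' hnWb
      · exact absurd hWb' hnWb
      · exact Or.inl ⟨hWa, hnWc⟩
      · exact Or.inl ⟨hWa, hnWc⟩
      · refine Or.inr (Or.inl ⟨hWa, hWc, ?_⟩)
        rcases hlex with h | ⟨h, hLab⟩ <;> rcases hlex' with h' | ⟨h', hLbc⟩
        · exact Or.inl (h.trans h')
        · exact Or.inl (h'.symm ▸ h)
        · exact Or.inl (h ▸ h')
        · exact Or.inr ⟨h.trans h', Ltrans _ _ _ hLab hLbc⟩
      · exact absurd hWb hnWb'
      · exact absurd hWb' hnWb
      · exact absurd hWb' hnWb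
      · exact Or.inr (Or.inr ⟨hnWa, hnWc, Ltrans _ _ _ hLab hLbc⟩)
  · -- total
    intro a b hne
    by_cases heq : tsa a = tsa b
    · by_cases hWa : W a <;> by_cases hWb : W b
      · rcases lt_trichotomy (ts a) (ts b) with h | h | h
        · exact Or.inl (Or.inr ⟨heq, Or.inr (Or.inl ⟨hWa, hWb, Or.inl h⟩)⟩)
        · by_cases hreg : reg a = reg b
          · exact absurd (h6 _ _ hWa hWb hreg h) hne
          · rcases Ltotal a b hne with hl | hl
            · exact Or.inl (Or.inr ⟨heq, Or.inr (Or.inl ⟨hWa, hWb, Or.inr ⟨h, hl⟩⟩)⟩)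
            · exact Or.inr (Or.inr ⟨heq.symm, Or.inr (Or.inl ⟨hWb, hWa, Or.inr ⟨h.symm, hl⟩⟩)⟩)
        · exact Or.inr (Or.inr ⟨heq.symm, Or.inr (Or.inl ⟨hWb, hWa, Or.inl h⟩)⟩)
      · exact Or.inl (Or.inr ⟨heq, Or.inl ⟨hWa, hWb⟩⟩)
      · exact Or.inr (Or.inr ⟨heq.symm, Or.inl ⟨hWb, hWa⟩⟩)
      · rcases Ltotal a b hne with hl | hl
        · exact Or.inl (Or.inr ⟨heq, Or.inr (Or.inr ⟨hWa, hWb, hl⟩)⟩)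
        · exact Or.inr (Or.inr ⟨heq.symm, Or.inr (Or.inr ⟨hWb, hWa, hl⟩)⟩)
    · rcases h1 a b with h | h
      · exact Or.inl (Or.inl ⟨h, heq⟩)
      · exact Or.inr (Or.inl ⟨h, fun e => heq e.symm⟩)
  · -- extends prec
    intro a b hp
    by_cases heq : tsa a = tsa b
    · have hnWb : ¬ W b := fun h => h3 _ _ hp h heq
      by_cases hWa : W a
      · exact Or.inr ⟨heq, Or.inl ⟨hWa, hnWb⟩⟩
      · exact Or.inr ⟨heq, Or.inr (Or.inr ⟨hWa, hnWb, Lprec _ _ hp⟩)⟩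
    · exact Or.inl ⟨h2 _ _ hp, heq⟩
  · -- snapshot reads last write
    intro s hs r
    obtain ⟨w, hWw, hrw, hts⟩ := h7 s hs r
    have hws : tsa w ≤ tsa s := h5 _ _ hWw (by rw [hrw]; exact hts.le)
    have hTws : T w s := by
      by_cases heq : tsa w = tsa s
      · exact Or.inr ⟨heq, Or.inl ⟨hWw, hs⟩⟩
      · exact Or.inl ⟨hws, heq⟩
    refine ⟨w, hWw, hrw, hts, hTws, ?_⟩
    intro w' hne hWw' hrw'
    by_cases h : tsa w' ≤ tsa s
    · -- tsa w' ≤ tsa s : then ts w' < ts w and tsa w' ≤ tsa w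
      left
      have h4' : ts w' ≤ tsa w' (reg w') := h4 _ hWw'
      have hlt : ts w' < ts w := by
        have : ts w' ≤ ts w := by
          calc ts w' ≤ tsa w' (reg w') := h4'
            _ ≤ tsa s (reg w') := h (reg w')
            _ = tsa s r := by rw [hrw']
            _ = ts w := hts.symm
        exact lt_of_le_of_ne this (fun e => hne (h6 _ _ hWw' hWw (hrw'.trans hrw.symm) e))
      have hww : tsa w' ≤ tsa w := by
        apply h5 _ _ hWw'
        calc ts w' ≤ ts w := hlt.le
          _ ≤ tsa w (reg w) := h4 _ hWw
          _ = tsa w (reg w') := by rw [hrw, hrw']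
      by_cases heq : tsa w' = tsa w
      · exact Or.inr ⟨heq, Or.inr (Or.inl ⟨hWw', hWw, Or.inl hlt⟩)⟩
      · exact Or.inl ⟨hww, heq⟩
    · -- tsa s < tsa w' : T s w'
      right
      have hsw : tsa s ≤ tsa w' := (h1 w' s).resolve_left h
      exact Or.inl ⟨hsw, fun e => h (e ▸ le_refl _)⟩
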